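/- Let α ∈ ℂ*, q ≥ 1, n ≥ 2 with q ≥ n−1, and define Φ : Λ/((t−α)^q) → ℂ^{1×(n-1)} on the basis e_j = [(t−α)^j] by Φ(e_j) = α^j e₁ᵀ (J⁻¹ − I)^j for 0 ≤ j ≤ q−1, extended ℂ-linearly, where J is the (n-1)×(n-1) unipotent Jordan block and e₁ᵀ = (1,0,…,0). Then Φ((t−α)^q · y) = 0 for all y, i.e., Φ is well-defined on the quotient, and Φ(t·y) = α Φ(y) J⁻¹ for all y. -/

import Mathlib

open LaurentPolynomial

/-- The m×m nilpotent matrix with 1's on the superdiagonal. -/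
def Nmat (m : ℕ) : Matrix (Fin m) (Fin m) ℂ :=
  Matrix.of fun i j => if (i : ℕ) + 1 = (j : ℕ) then 1 else 0

lemma Nmat_pow_apply (m k : ℕ) (i j : Fin m) :
    ((Nmat m) ^ k) i j = if (i : ℕ) + k = (j : ℕ) then 1 else 0 := by
  induction k generalizing j with
  | zero => simp [Matrix.one_apply, Fin.ext_iff]
  | succ k ih =>
    rw [pow_succ, Matrix.mul_apply]
    simp only [ih]
    by_cases h : (i : ℕ) + k < m
    · rw [Finset.sum_eq_single (⟨(i:ℕ)+k, h⟩ : Fin m)]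
      · simp only [if_pos rfl, one_mul, Nmat, Matrix.of_apply]
        simp [← add_assoc]
      · intro l _ hl
        rw [if_neg, zero_mul]
        simpa [Fin.ext_iff, eq_comm] using hl
      · simp
    · rw [Finset.sum_eq_zero, eq_comm, if_neg]
      · omega
      · intro l _
        rw [if_neg, zero_mul]
        omega

lemma Nmat_pow_self (m : ℕ) : (Nmat m) ^ m = 0 := by
  ext i j
  rw [Nmat_pow_apply, Matrix.zero_apply, if_neg]
  have := j.2
  omega

lemma isUnit_det_J (m : ℕ) : IsUnit (1 + Nmat m).det :=
  (Matrix.isUnit_iff_isUnit_det _).mp (IsNilpotent.isUnit_one_add ⟨m, Nmat_pow_self m⟩)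

lemma P_pow_self (m : ℕ) : ((1 + Nmat m)⁻¹ - 1) ^ m = 0 := by
  set J := (1 + Nmat m) with hJdef
  set P := J⁻¹ - 1 with hPdef
  have hJJ : J * J⁻¹ = 1 := Matrix.mul_nonsing_inv _ (isUnit_det_J m)
  have hJJ' : J⁻¹ * J = 1 := Matrix.nonsing_inv_mul _ (isUnit_det_J m)
  have hcomm : Commute P J := by
    show (J⁻¹ - 1) * J = J * (J⁻¹ - 1)
    rw [sub_mul, mul_sub, hJJ, hJJ', mul_one, one_mul]
  have hPJ : P * J = -(Nmat m) := by
    show (J⁻¹ - 1) * J = -(Nmat m)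
    rw [sub_mul, hJJ', one_mul, hJdef]
    abel
  have h1 : P ^ m * J ^ m = 0 := by
    rw [← hcomm.mul_pow, hPJ, neg_pow, Nmat_pow_self, mul_zero]
  have h2 : J ^ m * (J⁻¹) ^ m = 1 := by
    have : Commute J J⁻¹ := by rw [Commute, SemiconjBy, hJJ, hJJ']
    rw [← this.mul_pow, hJJ, one_pow]
  calc P ^ m = P ^ m * (J ^ m * (J⁻¹) ^ m) := by rw [h2, mul_one]
    _ = P ^ m * J ^ m * (J⁻¹) ^ m := by rw [mul_assoc]
    _ = 0 := by rw [h1, zero_mul]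

theorem stmt14 (n q : ℕ) (hn : 2 ≤ n) (hq : 1 ≤ q) (hqn : n - 1 ≤ q)
    (α : ℂ) (hα : α ≠ 0)
    (b : Module.Basis (Fin q) ℂ
      (LaurentPolynomial ℂ ⧸ Ideal.span {((T 1 - C α) ^ q : LaurentPolynomial ℂ)}))
    (hb : ∀ j : Fin q,
      b j = Ideal.Quotient.mk _ ((T 1 - C α) ^ (j : ℕ) : LaurentPolynomial ℂ))
    (Φ : (LaurentPolynomial ℂ ⧸
        Ideal.span {((T 1 - C α) ^ q : LaurentPolynomial ℂ)}) →ₗ[ℂ] (Fin (n - 1) → ℂ))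
    (hΦ : ∀ j : Fin q,
      Φ (b j) = α ^ (j : ℕ) •
        Matrix.vecMul (fun i : Fin (n - 1) => if (i : ℕ) = 0 then (1 : ℂ) else 0)
          (((1 + Nmat (n - 1))⁻¹ - 1) ^ (j : ℕ))) :
    (∀ y, Φ (Ideal.Quotient.mk _ (((T 1 - C α) ^ q : LaurentPolynomial ℂ)) * y) = 0) ∧
    (∀ y, Φ (Ideal.Quotient.mk _ (T 1 : LaurentPolynomial ℂ) * y)
      = α • Matrix.vecMul (Φ y) (1 + Nmat (n - 1))⁻¹) := by
  have hzero : (Ideal.Quotient.mk (Ideal.span {((T 1 - C α) ^ q : LaurentPolynomial ℂ)})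
      ((T 1 - C α) ^ q : LaurentPolynomial ℂ)) = 0 :=
    Ideal.Quotient.eq_zero_iff_mem.mpr (Ideal.subset_span rfl)
  constructor
  · intro y
    rw [hzero, zero_mul, map_zero]
  · -- second part
    set e₁ : Fin (n - 1) → ℂ := fun i : Fin (n - 1) => if (i : ℕ) = 0 then (1 : ℂ) else 0
    set P : Matrix (Fin (n-1)) (Fin (n-1)) ℂ := (1 + Nmat (n - 1))⁻¹ - 1 with hPdef
    have hJinv : (1 + Nmat (n - 1))⁻¹ = P + 1 := by rw [hPdef, sub_add_cancel]
    have hPq : P ^ q = 0 := by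
      rw [← Nat.sub_add_cancel hqn, pow_add, P_pow_self, mul_zero]
    have hCsmul : ∀ p : LaurentPolynomial ℂ, C α * p = α • p := by
      intro p
      rw [Algebra.smul_def, ← LaurentPolynomial.C_eq_algebraMap]
    have key : ∀ j : Fin q,
        Φ (Ideal.Quotient.mk _ (T 1 : LaurentPolynomial ℂ) * b j)
          = α • Matrix.vecMul (Φ (b j)) (1 + Nmat (n - 1))⁻¹ := by
      intro j
      have hsplit : (T 1 : LaurentPolynomial ℂ) * (T 1 - C α) ^ (j : ℕ)
          = (T 1 - C α) ^ ((j : ℕ) + 1) + C α * (T 1 - C α) ^ (j : ℕ) := by ring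
      have hLHS : Φ (Ideal.Quotient.mk _ (T 1 : LaurentPolynomial ℂ) * b j)
          = Φ (Ideal.Quotient.mk _ ((T 1 - C α) ^ ((j : ℕ) + 1) : LaurentPolynomial ℂ))
            + α • Φ (b j) := by
        have hmk : (Ideal.Quotient.mk (Ideal.span {((T 1 - C α) ^ q : LaurentPolynomial ℂ)}))
            (α • ((T 1 - C α) ^ (j:ℕ) : LaurentPolynomial ℂ))
            = α • (Ideal.Quotient.mk _ ((T 1 - C α) ^ (j:ℕ) : LaurentPolynomial ℂ)) := by
          rw [← Ideal.Quotient.mkₐ_eq_mk ℂ, map_smul]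
        rw [hb j, ← map_mul, hsplit, map_add, hCsmul, hmk, map_add, map_smul, ← hb j]
      rw [hLHS, hΦ j, hJinv]
      have hrhs : α • Matrix.vecMul (α ^ (j:ℕ) • Matrix.vecMul e₁ (P ^ (j:ℕ))) (P + 1)
          = (α ^ ((j:ℕ)+1) • Matrix.vecMul e₁ (P ^ ((j:ℕ)+1)))
            + α • (α ^ (j:ℕ) • Matrix.vecMul e₁ (P ^ (j:ℕ))) := by
        rw [Matrix.smul_vecMul, Matrix.vecMul_vecMul, mul_add, mul_one, ← pow_succ,
          Matrix.vecMul_add, smul_add, smul_add, smul_smul, smul_smul, ← pow_succ']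
      rw [hrhs]
      congr 1
      by_cases hj : (j : ℕ) + 1 < q
      · have := hΦ ⟨(j:ℕ)+1, hj⟩
        rw [hb ⟨(j:ℕ)+1, hj⟩] at this
        simpa using this
      · have hjq : (j : ℕ) + 1 = q := by have := j.2; omega
        rw [hjq, hzero, map_zero, ← hjq, pow_succ]
        have : P ^ ((j:ℕ)+1) = 0 := by
          rw [hjq, hPq]
        rw [this, Matrix.vecMul_zero, smul_zero]
    -- extend to all y by linearity
    intro y
    have hy : (Φ ∘ₗ LinearMap.mulLeft ℂ (Ideal.Quotient.mk _ (T 1 : LaurentPolynomial ℂ)))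
        = α • ((Matrix.vecMulLinear ((1 + Nmat (n - 1))⁻¹)) ∘ₗ Φ) := b.ext fun j => by
      simp only [LinearMap.comp_apply, LinearMap.mulLeft_apply, LinearMap.smul_apply,
        Matrix.vecMulLinear_apply]
      exact key j
    have h := LinearMap.congr_fun hy y
    simp only [LinearMap.comp_apply, LinearMap.mulLeft_apply, LinearMap.smul_apply,
      Matrix.vecMulLinear_apply] at h
    exact h
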